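/- Let D₁ < D₂ be positive integers with D₁ ∤ D₂. Then the cyclotomic polynomials Φ_{D₁}(T) and Φ_{D₂}(T) generate the unit ideal in ℤ[T]. -/

import Mathlib

open Polynomial

/-- Auxiliary: if `d` is a proper divisor of `n`, then the integer `n / d` lies in any ideal
containing `cyclotomic n ℤ` and `X ^ d - 1`. -/
lemma nat_div_mem_of_cyclotomic_mem {I : Ideal (Polynomial ℤ)} {n d : ℕ}
    (hd : d ∈ n.properDivisors) (hcyc : cyclotomic n ℤ ∈ I) (hX : (X : Polynomial ℤ) ^ d - 1 ∈ I) :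
    ((n / d : ℕ) : Polynomial ℤ) ∈ I := by
  obtain ⟨hdvd, hlt⟩ := Nat.mem_properDivisors.mp hd
  have h0d : 0 < d := Nat.pos_of_dvd_of_pos hdvd (pos_of_gt hlt)
  set k := n / d with hk
  have hkd : d * k = n := Nat.mul_div_cancel' hdvd
  -- geometric sum
  set G : Polynomial ℤ := ∑ i ∈ Finset.range k, (X ^ d) ^ i with hG
  have hgeom : G * (X ^ d - 1) = X ^ n - 1 := by
    rw [hG, geom_sum_mul, ← pow_mul, mul_comm d k, mul_comm k d, hkd]
  have hdvd2 : (X ^ d - 1) * cyclotomic n ℤ ∣ (X ^ d - 1) * G := by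
    rw [mul_comm (X ^ d - 1) G, hgeom]
    exact X_pow_sub_one_mul_cyclotomic_dvd_X_pow_sub_one_of_dvd ℤ hd
  have hXd_ne : (X : Polynomial ℤ) ^ d - 1 ≠ 0 := by
    intro h
    have h2 : ((X : Polynomial ℤ) ^ d - (C 1)).natDegree = d := natDegree_X_pow_sub_C
    rw [map_one, h] at h2
    simp at h2
    omega
  have hcycG : cyclotomic n ℤ ∣ G := (mul_dvd_mul_iff_left hXd_ne).mp hdvd2
  have hGmem : G ∈ I := by
    obtain ⟨c, hc⟩ := hcycG
    rw [hc]
    exact Ideal.mul_mem_right _ _ hcyc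
  -- G - k is divisible by X^d - 1
  have hGk : (X ^ d - 1 : Polynomial ℤ) ∣ G - (k : Polynomial ℤ) := by
    have : G - (k : Polynomial ℤ) = ∑ i ∈ Finset.range k, ((X ^ d) ^ i - 1) := by
      rw [hG, Finset.sum_sub_distrib]
      simp
    rw [this]
    apply Finset.dvd_sum
    intro i _
    simpa using sub_dvd_pow_sub_pow ((X : Polynomial ℤ) ^ d) 1 i
  have : G - (k : Polynomial ℤ) ∈ I := by
    obtain ⟨c, hc⟩ := hGk
    rw [hc]
    exact Ideal.mul_mem_right _ _ hX
  have := I.sub_mem hGmem this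
  simpa using this

/-- Let `D₁ < D₂` be positive integers with `D₁ ∤ D₂`.  Then `Φ_{D₁}(T)` and `Φ_{D₂}(T)`
generate the unit ideal of `ℤ[T]`. -/
theorem cyclotomic_span_eq_top (D₁ D₂ : ℕ) (h₁ : 0 < D₁) (hlt : D₁ < D₂)
    (hndvd : ¬ D₁ ∣ D₂) :
    Ideal.span ({cyclotomic D₁ ℤ, cyclotomic D₂ ℤ} : Set (Polynomial ℤ)) = ⊤ := by
  set I := Ideal.span ({cyclotomic D₁ ℤ, cyclotomic D₂ ℤ} : Set (Polynomial ℤ)) with hI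
  have h₂ : 0 < D₂ := h₁.trans hlt
  have hmem1 : cyclotomic D₁ ℤ ∈ I := Ideal.subset_span (by simp)
  have hmem2 : cyclotomic D₂ ℤ ∈ I := Ideal.subset_span (by simp)
  set d := Nat.gcd D₁ D₂ with hd
  have hd1 : d ∣ D₁ := Nat.gcd_dvd_left _ _
  have hd2 : d ∣ D₂ := Nat.gcd_dvd_right _ _
  have hdpos : 0 < d := Nat.gcd_pos_of_pos_left _ h₁
  have hdne1 : d ≠ D₁ := fun h => hndvd (h ▸ hd2)
  have hdlt1 : d < D₁ := lt_of_le_of_ne (Nat.le_of_dvd h₁ hd1) hdne1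
  have hdlt2 : d < D₂ := hdlt1.trans hlt
  -- X^Dᵢ - 1 ∈ I
  have hXD : ∀ n : ℕ, cyclotomic n ℤ ∈ I → (X : Polynomial ℤ) ^ n - 1 ∈ I := by
    intro n hn
    obtain ⟨c, hc⟩ := cyclotomic.dvd_X_pow_sub_one n ℤ
    rw [hc]
    exact Ideal.mul_mem_right _ _ hn
  have hXD1 : (X : Polynomial ℤ) ^ D₁ - 1 ∈ I := hXD _ hmem1
  have hXD2 : (X : Polynomial ℤ) ^ D₂ - 1 ∈ I := hXD _ hmem2
  -- X^d - 1 ∈ I via orderOf in the quotient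
  have hXd : (X : Polynomial ℤ) ^ d - 1 ∈ I := by
    set t := Ideal.Quotient.mk I (X : Polynomial ℤ) with ht
    have hpow : ∀ n : ℕ, (X : Polynomial ℤ) ^ n - 1 ∈ I → t ^ n = 1 := by
      intro n hn
      have := (Ideal.Quotient.eq_zero_iff_mem).mpr hn
      rw [map_sub, map_pow, map_one, sub_eq_zero] at this
      exact this
    have h1 := orderOf_dvd_of_pow_eq_one (hpow _ hXD1)
    have h2 := orderOf_dvd_of_pow_eq_one (hpow _ hXD2)
    have hdvd := Nat.dvd_gcd h1 h2
    have : t ^ d = 1 := orderOf_dvd_iff_pow_eq_one.mp hdvd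
    rw [← Ideal.Quotient.eq_zero_iff_mem, map_sub, map_pow, map_one, sub_eq_zero]
    exact this
  -- integers D₁/d, D₂/d ∈ I
  have hk1 : ((D₁ / d : ℕ) : Polynomial ℤ) ∈ I :=
    nat_div_mem_of_cyclotomic_mem (Nat.mem_properDivisors.mpr ⟨hd1, hdlt1⟩) hmem1 hXd
  have hk2 : ((D₂ / d : ℕ) : Polynomial ℤ) ∈ I :=
    nat_div_mem_of_cyclotomic_mem (Nat.mem_properDivisors.mpr ⟨hd2, hdlt2⟩) hmem2 hXd
  -- they are coprime
  have hcop : Nat.Coprime (D₁ / d) (D₂ / d) := Nat.coprime_div_gcd_div_gcd hdpos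
  have hcopZ : IsCoprime ((D₁ / d : ℕ) : ℤ) ((D₂ / d : ℕ) : ℤ) :=
    Int.isCoprime_iff_gcd_eq_one.mpr (by simpa [Int.gcd, -Int.natCast_ediv] using hcop)
  have hcopP : IsCoprime ((D₁ / d : ℕ) : Polynomial ℤ) ((D₂ / d : ℕ) : Polynomial ℤ) := by
    have := hcopZ.map (Int.castRingHom (Polynomial ℤ))
    simpa [-Int.natCast_ediv] using this
  obtain ⟨a, b, hab⟩ := hcopP
  rw [Ideal.eq_top_iff_one, ← hab]
  exact I.add_mem (Ideal.mul_mem_left _ _ hk1) (Ideal.mul_mem_left _ _ hk2)
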